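/- The matrix H_c(1) has a nontrivial Jordan block at the eigenvalue 3: the number 3 is a root of multiplicity exactly 2 of the characteristic polynomial of H_c(1), while the kernel of H_c(1) − 3·I₅ is one-dimensional (the geometric multiplicity of the eigenvalue 3 equals 1). -/

import Mathlib

open Matrix

/-- The Hamiltonian `H_c(R)` of Eq. (dvojak). -/
def Hc (R : ℝ) : Matrix (Fin 5) (Fin 5) ℝ :=
  !![2 + R, -1 + R, 0, 0, 0;
     -1, 2, -1, 0, 0;
     0, -1, 2, -1, 0;
     0, 0, -1, 2, -1 + R;
     0, 0, 0, -1, 2 + R]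

open Polynomial in
lemma Hc_charmatrix : charmatrix (Hc 1) =
    !![X - 3, 0, 0, 0, 0;
       1, X - 2, 1, 0, 0;
       0, 1, X - 2, 1, 0;
       0, 0, 1, X - 2, 0;
       0, 0, 0, 1, X - 3] := by
  refine Matrix.ext fun i j => ?_
  fin_cases i <;> fin_cases j <;>
    norm_num [Hc, charmatrix_apply, Matrix.diagonal_apply, Fin.ext_iff, map_ofNat]

open Polynomial in
set_option maxHeartbeats 1000000 in
lemma Hc_charp : (Hc 1).charpoly =
    (X^3 - 6*X^2 + 10*X - 4) * (X - 3)^2 := by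
  rw [Matrix.charpoly, Hc_charmatrix]
  simp [Matrix.det_succ_row_zero, Fin.sum_univ_succ, Fin.succAbove, Matrix.submatrix]
  ring

open Polynomial in
/-- at `R = 1`, the eigenvalue `3` of `H_c(1)` has algebraic
multiplicity exactly `2` but geometric multiplicity `1`, i.e. a nontrivial
Jordan block occurs. -/
theorem Hc_one_jordan_block :
    (Polynomial.rootMultiplicity 3 (Matrix.charpoly (Hc 1)) = 2) ∧
    Module.finrank ℝ
      (LinearMap.ker (Matrix.mulVecLin (Hc 1 - (3 : ℝ) • (1 : Matrix (Fin 5) (Fin 5) ℝ)))) = 1 := by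
  constructor
  · have hq : (X^3 - 6*X^2 + 10*X - 4 : ℝ[X]).eval 3 = -1 := by norm_num
    have hq0 : (X^3 - 6*X^2 + 10*X - 4 : ℝ[X]) ≠ 0 := fun h => by simp [h] at hq
    have h3 : ((3 : ℝ[X]) = C 3) := by norm_num [map_ofNat]
    rw [Hc_charp, h3, rootMultiplicity_mul_X_sub_C_pow hq0,
      rootMultiplicity_eq_zero (by simp [Polynomial.IsRoot, hq])]
  · have hker : LinearMap.ker
        (Matrix.mulVecLin (Hc 1 - (3 : ℝ) • (1 : Matrix (Fin 5) (Fin 5) ℝ)))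
        = Submodule.span ℝ {![0,0,0,0,1]} := by
      ext x
      rw [LinearMap.mem_ker, Submodule.mem_span_singleton]
      constructor
      · intro h
        have h1 := congrFun h 1
        have h2 := congrFun h 2
        have h3 := congrFun h 3
        have h4 := congrFun h 4
        simp [Hc, Matrix.mulVecLin_apply, Matrix.mulVec, dotProduct,
          Fin.sum_univ_five, Matrix.one_apply] at h1 h2 h3 h4
        refine ⟨x 4, ?_⟩
        funext i
        fin_cases i <;> simp <;> linarith
      · rintro ⟨c, rfl⟩
        funext i
        fin_cases i <;>
          simp [Hc, Matrix.mulVecLin_apply, Matrix.mulVec, dotProduct,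
            Fin.sum_univ_five, Matrix.one_apply] <;> norm_num <;> ring
    rw [hker]
    exact finrank_span_singleton (by
      intro h
      have := congrFun h 4
      exact one_ne_zero this)
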